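/- Let u(x,y) be a nonzero polynomial in ℤ[x,y] all of whose coefficients lie in {-1,0,1}. Then 1 + x + y does not divide u(x³, y³) in ℤ[x,y]. -/

import Mathlib

open MvPolynomial

/-- Eisenstein integers `ℤ[ω]`, as pairs `a + b ω` with `ω² + ω + 1 = 0`. -/
@[ext] structure Eis where
  re : ℤ
  im : ℤ
deriving DecidableEq

namespace Eis

instance : Zero Eis := ⟨⟨0, 0⟩⟩
instance : One Eis := ⟨⟨1, 0⟩⟩
instance : Add Eis := ⟨fun a b => ⟨a.re + b.re, a.im + b.im⟩⟩
instance : Neg Eis := ⟨fun a => ⟨-a.re, -a.im⟩⟩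
instance : Mul Eis := ⟨fun a b => ⟨a.re * b.re - a.im * b.im,
  a.re * b.im + a.im * b.re - a.im * b.im⟩⟩

@[simp] lemma zero_re : (0 : Eis).re = 0 := rfl
@[simp] lemma zero_im : (0 : Eis).im = 0 := rfl
@[simp] lemma one_re : (1 : Eis).re = 1 := rfl
@[simp] lemma one_im : (1 : Eis).im = 0 := rfl
@[simp] lemma add_re (a b : Eis) : (a + b).re = a.re + b.re := rfl
@[simp] lemma add_im (a b : Eis) : (a + b).im = a.im + b.im := rfl
@[simp] lemma neg_re (a : Eis) : (-a).re = -a.re := rfl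
@[simp] lemma neg_im (a : Eis) : (-a).im = -a.im := rfl
@[simp] lemma mul_re (a b : Eis) : (a * b).re = a.re * b.re - a.im * b.im := rfl
@[simp] lemma mul_im (a b : Eis) : (a * b).im = a.re * b.im + a.im * b.re - a.im * b.im := rfl

instance commRing : CommRing Eis where
  add_assoc a b c := by ext <;> simp <;> ring
  zero_add a := by ext <;> simp
  add_zero a := by ext <;> simp
  add_comm a b := by ext <;> simp <;> ring
  mul_assoc a b c := by ext <;> simp <;> ring
  one_mul a := by ext <;> simp
  mul_one a := by ext <;> simp
  left_distrib a b c := by ext <;> simp <;> ring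
  right_distrib a b c := by ext <;> simp <;> ring
  mul_comm a b := by ext <;> simp <;> ring
  zero_mul a := by ext <;> simp
  mul_zero a := by ext <;> simp
  neg_add_cancel a := by ext <;> simp
  natCast n := ⟨n, 0⟩
  natCast_zero := by ext <;> simp
  natCast_succ n := by ext <;> simp
  intCast n := ⟨n, 0⟩
  intCast_ofNat n := by ext <;> rfl
  intCast_negSucc n := by
    ext
    · show Int.negSucc n = -((n+1 : ℕ) : ℤ)
      simp [Int.negSucc_eq]
    · show (0:ℤ) = -(0:ℤ)
      simp
  nsmul := nsmulRec
  zsmul := zsmulRec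

@[simp] lemma natCast_re (n : ℕ) : (n : Eis).re = n := rfl
@[simp] lemma natCast_im (n : ℕ) : (n : Eis).im = 0 := rfl
@[simp] lemma intCast_re (n : ℤ) : (n : Eis).re = n := rfl
@[simp] lemma intCast_im (n : ℤ) : (n : Eis).im = 0 := rfl

instance : CharZero Eis := by
  constructor
  intro m n h
  have : (m : Eis).re = (n : Eis).re := by rw [h]
  simpa using this

/-- The norm. -/
def norm (a : Eis) : ℤ := a.re ^ 2 - a.re * a.im + a.im ^ 2

lemma norm_mul (a b : Eis) : norm (a * b) = norm a * norm b := by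
  simp [norm]; ring

lemma norm_eq_zero {a : Eis} (h : norm a = 0) : a = 0 := by
  have h4 : (2 * a.re - a.im) ^ 2 + 3 * a.im ^ 2 = 0 := by
    have := h; simp [norm] at this; nlinarith [this]
  have h1 : a.im = 0 := by nlinarith [sq_nonneg (2 * a.re - a.im), sq_nonneg a.im]
  have h2 : a.re = 0 := by nlinarith [h4, h1]
  ext <;> simp [h1, h2]

instance : NoZeroDivisors Eis := by
  constructor
  intro a b hab
  by_contra h
  push_neg at h
  obtain ⟨ha, hb⟩ := h
  have : norm a * norm b = 0 := by rw [← norm_mul, hab]; simp [norm]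
  rcases mul_eq_zero.1 this with h' | h'
  · exact ha (norm_eq_zero h')
  · exact hb (norm_eq_zero h')

instance : Nontrivial Eis := ⟨⟨0, 1, by intro h; have := congrArg Eis.re h; simp at this⟩⟩

instance : IsDomain Eis := NoZeroDivisors.to_isDomain Eis

/-- The primitive cube root of unity. -/
def ω : Eis := ⟨0, 1⟩

lemma ω_sq : ω ^ 2 + ω + 1 = 0 := by
  ext <;> simp [ω, pow_two]

lemma ω_cube : ω ^ 3 = 1 := by
  ext <;> simp [ω, pow_succ, pow_zero]

/-- Conjugation. -/
def conj : Eis →+* Eis where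
  toFun a := ⟨a.re - a.im, -a.im⟩
  map_one' := by ext <;> simp
  map_mul' a b := by ext <;> simp <;> ring
  map_zero' := by ext <;> simp
  map_add' a b := by ext <;> simp <;> ring

lemma eq_intCast_of_conj_fixed {a : Eis} (h : conj a = a) : (a.re : Eis) = a := by
  have him : (conj a).im = a.im := by rw [h]
  simp [conj] at him
  have : a.im = 0 := by omega
  ext <;> simp [this]

end Eis

noncomputable section

abbrev P2 := MvPolynomial (Fin 2) Eis
abbrev PZ := MvPolynomial (Fin 2) ℤ

/-- The linear factor `1 + ω^a x + ω^b y`. -/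
def L (a b : ℕ) : P2 := 1 + C (Eis.ω ^ a) * X 0 + C (Eis.ω ^ b) * X 1

lemma hwP : (C Eis.ω : P2) ^ 2 + C Eis.ω + 1 = 0 := by
  have h := congrArg (C : Eis → P2) Eis.ω_sq
  simpa [map_add, map_pow, map_one] using h

lemma cube_helper {R : Type*} [CommRing R] (w A B : R) (hw : w ^ 2 + w + 1 = 0) :
    (A + B) * (A + w * B) * (A + w ^ 2 * B) = A ^ 3 + B ^ 3 := by
  linear_combination (A ^ 2 * B + A * B ^ 2 * w + B ^ 3 * (w - 1)) * hw

lemma L_group (b : ℕ) :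
    L 0 b * L 1 b * L 2 b = (1 + C (Eis.ω ^ b) * X 1) ^ 3 + X 0 ^ 3 := by
  have h := cube_helper (C Eis.ω : P2) (1 + C (Eis.ω ^ b) * X 1) (X 0) hwP
  rw [← h]
  simp only [L, map_pow]
  ring

/-- The degree-9 polynomial `(1+x³+y³)³ - 27x³y³`, over any commutative ring. -/
def F9 (R : Type*) [CommRing R] : MvPolynomial (Fin 2) R :=
  (1 + X 0 ^ 3 + X 1 ^ 3) ^ 3 - 27 * (X 0 ^ 3 * X 1 ^ 3)

lemma prod_L : (L 0 0 * L 1 0 * L 2 0) * (L 0 1 * L 1 1 * L 2 1) * (L 0 2 * L 1 2 * L 2 2)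
    = F9 Eis := by
  rw [L_group 0, L_group 1, L_group 2]
  simp only [map_pow, F9]
  linear_combination ((3 : P2) * X 1 + (3 : P2) * X 1 ^ 2 + (6 : P2) * X 1 ^ 2 * C Eis.ω + (3 : P2) * X 1 ^ 2 * (C Eis.ω) ^ 2 - (2 : P2) * X 1 ^ 3 + (11 : P2) * X 1 ^ 3 * C Eis.ω + (9 : P2) * X 1 ^ 3 * (C Eis.ω) ^ 2 + (8 : P2) * X 1 ^ 3 * (C Eis.ω) ^ 3 + X 1 ^ 3 * (C Eis.ω) ^ 4 + (3 : P2) * X 1 ^ 4 * C Eis.ω + (9 : P2) * X 1 ^ 4 * (C Eis.ω) ^ 2 + (18 : P2) * X 1 ^ 4 * (C Eis.ω) ^ 3 + (9 : P2) * X 1 ^ 4 * (C Eis.ω) ^ 4 + (3 : P2) * X 1 ^ 4 * (C Eis.ω) ^ 5 + (3 : P2) * X 1 ^ 5 * (C Eis.ω) ^ 2 + (9 : P2) * X 1 ^ 5 * (C Eis.ω) ^ 3 + (18 : P2) * X 1 ^ 5 * (C Eis.ω) ^ 4 + (9 : P2) * X 1 ^ 5 * (C Eis.ω) ^ 5 +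 (3 : P2) * X 1 ^ 5 * (C Eis.ω) ^ 6 - (3 : P2) * X 1 ^ 6 + (3 : P2) * X 1 ^ 6 * C Eis.ω - (2 : P2) * X 1 ^ 6 * (C Eis.ω) ^ 3 + (11 : P2) * X 1 ^ 6 * (C Eis.ω) ^ 4 + (9 : P2) * X 1 ^ 6 * (C Eis.ω) ^ 5 + (8 : P2) * X 1 ^ 6 * (C Eis.ω) ^ 6 + X 1 ^ 6 * (C Eis.ω) ^ 7 + (3 : P2) * X 1 ^ 7 * (C Eis.ω) ^ 5 + (6 : P2) * X 1 ^ 7 * (C Eis.ω) ^ 6 + (3 : P2) * X 1 ^ 7 * (C Eis.ω) ^ 7 + (3 : P2) * X 1 ^ 8 * (C Eis.ω) ^ 7 - (1 : P2) * X 1 ^ 9 + X 1 ^ 9 * C Eis.ω - (1 : P2) * X 1 ^ 9 * (C Eis.ω) ^ 3 + X 1 ^ 9 * (C Eis.ω) ^ 4 - (1 : P2) * X 1 ^ 9 * (C Eis.ω) ^ 6 + X 1 ^ 9 * (C Eis.ω) ^ 7 + (6 : P2) * X 0 ^ 3 * X 1 + (6 : P2) * X 0 ^ 3 * X 1 ^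 2 + (3 : P2) * X 0 ^ 3 * X 1 ^ 2 * C Eis.ω + (6 : P2) * X 0 ^ 3 * X 1 ^ 2 * (C Eis.ω) ^ 2 + (23 : P2) * X 0 ^ 3 * X 1 ^ 3 - (14 : P2) * X 0 ^ 3 * X 1 ^ 3 * C Eis.ω + (9 : P2) * X 0 ^ 3 * X 1 ^ 3 * (C Eis.ω) ^ 2 + (7 : P2) * X 0 ^ 3 * X 1 ^ 3 * (C Eis.ω) ^ 3 + (2 : P2) * X 0 ^ 3 * X 1 ^ 3 * (C Eis.ω) ^ 4 + (3 : P2) * X 0 ^ 3 * X 1 ^ 4 * C Eis.ω + (9 : P2) * X 0 ^ 3 * X 1 ^ 4 * (C Eis.ω) ^ 2 - (9 : P2) * X 0 ^ 3 * X 1 ^ 4 * (C Eis.ω) ^ 3 + (9 : P2) * X 0 ^ 3 * X 1 ^ 4 * (C Eis.ω) ^ 4 + (3 : P2) * X 0 ^ 3 * X 1 ^ 4 * (C Eis.ω) ^ 5 + (3 : P2) * X 0 ^ 3 * X 1 ^ 5 * (C Eis.ω) ^ 2 + (3 : P2) * X 0 ^ 3 * X 1 ^ 5 * (C Eis.ω)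 ^ 6 - (3 : P2) * X 0 ^ 3 * X 1 ^ 6 + (3 : P2) * X 0 ^ 3 * X 1 ^ 6 * C Eis.ω - (2 : P2) * X 0 ^ 3 * X 1 ^ 6 * (C Eis.ω) ^ 3 + (2 : P2) * X 0 ^ 3 * X 1 ^ 6 * (C Eis.ω) ^ 4 - (1 : P2) * X 0 ^ 3 * X 1 ^ 6 * (C Eis.ω) ^ 6 + X 0 ^ 3 * X 1 ^ 6 * (C Eis.ω) ^ 7 + (3 : P2) * X 0 ^ 6 * X 1 + (3 : P2) * X 0 ^ 6 * X 1 ^ 2 - (3 : P2) * X 0 ^ 6 * X 1 ^ 2 * C Eis.ω + (3 : P2) * X 0 ^ 6 * X 1 ^ 2 * (C Eis.ω) ^ 2 - (2 : P2) * X 0 ^ 6 * X 1 ^ 3 + (2 : P2) * X 0 ^ 6 * X 1 ^ 3 * C Eis.ω - (1 : P2) * X 0 ^ 6 * X 1 ^ 3 * (C Eis.ω) ^ 3 + X 0 ^ 6 * X 1 ^ 3 * (C Eis.ω) ^ 4) * hwP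

end

noncomputable section
open Eis

lemma prime_lin : Prime (1 + X 0 + X 1 : P2) := by
  have key : (MvPolynomial.finSuccEquiv Eis 1) (1 + X 0 + X 1)
      = Polynomial.X - Polynomial.C (-(1 + X 0)) := by
    have h1 : (X 1 : P2) = X (Fin.succ 0) := rfl
    rw [h1, map_add, map_add, map_one, finSuccEquiv_X_zero, finSuccEquiv_X_succ]
    rw [map_neg, map_add, map_one]
    ring
  have h := Polynomial.prime_X_sub_C (R := MvPolynomial (Fin 1) Eis) (-(1 + X 0))
  rw [← key] at h
  exact (MulEquiv.prime_iff (MvPolynomial.finSuccEquiv Eis 1).toRingEquiv.toMulEquiv).mp h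

/-- Scaling `x ↦ s x`, `y ↦ t y`. -/
def scl (s t : Eis) : P2 →ₐ[Eis] P2 := aeval (fun i => C (![s, t] i) * X i)

lemma scl_comp (s t s' t' : Eis) (hs : s' * s = 1) (ht : t' * t = 1) :
    (scl s t).comp (scl s' t') = AlgHom.id Eis P2 := by
  apply MvPolynomial.algHom_ext
  intro i
  show (scl s t) ((scl s' t') (X i)) = X i
  simp only [scl, aeval_X, map_mul, aeval_C]
  rw [algebraMap_eq, ← mul_assoc, ← C_mul]
  have : ![s', t'] i * ![s, t] i = 1 := by
    fin_cases i
    · simpa using hs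
    · simpa using ht
  rw [this, C_1, one_mul]

lemma ω_pow_inv (a : ℕ) : Eis.ω ^ (2 * a) * Eis.ω ^ a = 1 := by
  rw [← pow_add]
  have h : 2 * a + a = 3 * a := by ring
  rw [h, pow_mul, Eis.ω_cube, one_pow]

/-- The scaling automorphism `x ↦ ω^a x`, `y ↦ ω^b y`. -/
def Φ (a b : ℕ) : P2 ≃ₐ[Eis] P2 :=
  AlgEquiv.ofAlgHom (scl (Eis.ω ^ a) (Eis.ω ^ b)) (scl (Eis.ω ^ (2 * a)) (Eis.ω ^ (2 * b)))
    (scl_comp _ _ _ _ (ω_pow_inv a) (ω_pow_inv b))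
    (scl_comp _ _ _ _ (by rw [mul_comm]; exact ω_pow_inv a) (by rw [mul_comm]; exact ω_pow_inv b))

lemma Φ_apply (a b : ℕ) (p : P2) :
    Φ a b p = aeval (fun i => C (![Eis.ω ^ a, Eis.ω ^ b] i) * X i) p := rfl

lemma Φ_lin (a b : ℕ) : Φ a b (1 + X 0 + X 1) = L a b := by
  rw [Φ_apply]
  simp only [map_add, map_one, aeval_X]
  simp only [L, Matrix.cons_val_zero, Matrix.cons_val_one, Matrix.head_cons]

lemma prime_L (a b : ℕ) : Prime (L a b) := by
  rw [← Φ_lin a b]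
  exact (MulEquiv.prime_iff (Φ a b).toRingEquiv.toMulEquiv).mpr prime_lin

/-- `u(x³, y³)` over the Eisenstein integers. -/
def UT (u : PZ) : P2 := aeval (fun i => (X i : P2) ^ 3) u

lemma Φ_UT (a b : ℕ) (u : PZ) : Φ a b (UT u) = UT u := by
  have hv3 : ∀ i : Fin 2, (![Eis.ω ^ a, Eis.ω ^ b] i) ^ 3 = 1 := by
    intro i
    have key : ∀ c : ℕ, (Eis.ω ^ c) ^ 3 = 1 := by
      intro c
      rw [← pow_mul, mul_comm, pow_mul, Eis.ω_cube, one_pow]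
    fin_cases i
    · simpa using key a
    · simpa using key b
  have h : (((Φ a b).toAlgHom.restrictScalars ℤ).comp
      (aeval (fun i => (X i : P2) ^ 3) : PZ →ₐ[ℤ] P2)) = aeval (fun i => (X i : P2) ^ 3) := by
    apply MvPolynomial.algHom_ext
    intro i
    simp only [AlgHom.comp_apply, AlgHom.coe_restrictScalars', AlgEquiv.toAlgHom_eq_coe,
      AlgHom.coe_coe, aeval_X]
    show Φ a b (X i ^ 3) = X i ^ 3
    rw [Φ_apply, map_pow, aeval_X, mul_pow, ← map_pow, hv3 i, C_1, one_mul]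
  calc Φ a b (UT u) = (((Φ a b).toAlgHom.restrictScalars ℤ).comp
      (aeval (fun i => (X i : P2) ^ 3) : PZ →ₐ[ℤ] P2)) u := rfl
  _ = UT u := by rw [h]; rfl

end

noncomputable section
open Eis

/-- `u(x³,y³)` over ℤ. -/
def UZ (u : PZ) : PZ := aeval (fun i => (X i : PZ) ^ 3) u

lemma map_UZ (u : PZ) : MvPolynomial.map (Int.castRingHom Eis) (UZ u) = UT u := by
  have h : (MvPolynomial.map (Int.castRingHom Eis)).comp
        ((aeval (fun i => (X i : PZ) ^ 3) : PZ →ₐ[ℤ] PZ) : PZ →+* PZ)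
      = ((aeval (fun i => (X i : P2) ^ 3) : PZ →ₐ[ℤ] P2) : PZ →+* P2) := by
    apply MvPolynomial.ringHom_ext
    · intro r
      simp [aeval_C, eq_intCast, map_intCast]
    · intro i
      simp [map_pow]
  exact RingHom.congr_fun h u

lemma L_dvd_UT (u : PZ) (hdvd : (1 + X 0 + X 1 : PZ) ∣ UZ u) (a b : ℕ) : L a b ∣ UT u := by
  have h1 : (1 + X 0 + X 1 : P2) ∣ UT u := by
    obtain ⟨q, hq⟩ := hdvd
    refine ⟨MvPolynomial.map (Int.castRingHom Eis) q, ?_⟩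
    rw [← map_UZ, hq]
    simp [map_mul, map_add, map_one]
  have h2 := map_dvd (Φ a b) h1
  rwa [Φ_lin, Φ_UT] at h2

lemma notdvd_point {q p : P2} (z : Fin 2 → Eis) (h0 : eval z q = 0) (h1 : eval z p ≠ 0) :
    ¬ q ∣ p := by
  rintro ⟨c, rfl⟩
  apply h1
  rw [map_mul, h0, zero_mul]

lemma eval_L (a b : ℕ) (z : Fin 2 → Eis) :
    eval z (L a b) = 1 + Eis.ω ^ a * z 0 + Eis.ω ^ b * z 1 := by
  simp [L]

lemma ω_pow_mod (k : ℕ) : Eis.ω ^ k = Eis.ω ^ (k % 3) := by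
  conv_lhs => rw [← Nat.div_add_mod k 3]
  rw [pow_add, pow_mul, Eis.ω_cube, one_pow, one_mul]

lemma ω_sq_eq : Eis.ω ^ 2 = ⟨-1, -1⟩ := by
  rw [pow_two]; ext <;> simp [Eis.ω]

lemma one_sub_ω_pow_ne (k : ℕ) (h : k % 3 ≠ 0) : (1 : Eis) - Eis.ω ^ k ≠ 0 := by
  rw [ω_pow_mod]
  have h3 : k % 3 = 1 ∨ k % 3 = 2 := by omega
  rcases h3 with h3 | h3 <;> rw [h3]
  · intro hh
    have him := congrArg Eis.im hh
    rw [sub_eq_add_neg] at him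
    simp [pow_one, Eis.ω] at him
  · intro hh
    have hre := congrArg Eis.re hh
    rw [sub_eq_add_neg, ω_sq_eq] at hre
    simp at hre

/-- If the `y`-exponents differ, neither divides the other. -/
lemma notdvd_L_snd {a b c d : ℕ} (hb : b < 3) (hd : d < 3) (hne : b ≠ d) :
    ¬ L a b ∣ L c d := by
  apply notdvd_point ![0, -(Eis.ω ^ (3 - b))]
  · rw [eval_L]
    have h : Eis.ω ^ b * Eis.ω ^ (3 - b) = 1 := by
      rw [← pow_add]
      have e : b + (3 - b) = 3 := by omega
      rw [e, Eis.ω_cube]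
    show 1 + Eis.ω ^ a * 0 + Eis.ω ^ b * -(Eis.ω ^ (3 - b)) = 0
    linear_combination -h
  · rw [eval_L]
    show 1 + Eis.ω ^ c * 0 + Eis.ω ^ d * -(Eis.ω ^ (3 - b)) ≠ 0
    have hr : 1 + Eis.ω ^ c * 0 + Eis.ω ^ d * -(Eis.ω ^ (3 - b))
        = 1 - Eis.ω ^ (d + (3 - b)) := by rw [pow_add]; ring
    rw [hr]
    exact one_sub_ω_pow_ne _ (by omega)

/-- If the `y`-exponents agree but `x`-exponents differ, neither divides the other. -/
lemma notdvd_L_fst {a b c d : ℕ} (ha : a < 3) (hc : c < 3) (hne : a ≠ c) :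
    ¬ L a b ∣ L c d := by
  apply notdvd_point ![-(Eis.ω ^ (3 - a)), 0]
  · rw [eval_L]
    have h : Eis.ω ^ a * Eis.ω ^ (3 - a) = 1 := by
      rw [← pow_add]
      have e : a + (3 - a) = 3 := by omega
      rw [e, Eis.ω_cube]
    show 1 + Eis.ω ^ a * -(Eis.ω ^ (3 - a)) + Eis.ω ^ b * 0 = 0
    linear_combination -h
  · rw [eval_L]
    show 1 + Eis.ω ^ c * -(Eis.ω ^ (3 - a)) + Eis.ω ^ d * 0 ≠ 0
    have hr : 1 + Eis.ω ^ c * -(Eis.ω ^ (3 - a)) + Eis.ω ^ d * 0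
        = 1 - Eis.ω ^ (c + (3 - a)) := by rw [pow_add]; ring
    rw [hr]
    exact one_sub_ω_pow_ne _ (by omega)

/-- Combined: distinct index pairs give non-divisibility. -/
lemma notdvd_L {a b c d : ℕ} (ha : a < 3) (hb : b < 3) (hc : c < 3) (hd : d < 3)
    (hne : (a, b) ≠ (c, d)) : ¬ L a b ∣ L c d := by
  by_cases h : b = d
  · subst h
    have hac : a ≠ c := fun h' => hne (by rw [h'])
    exact notdvd_L_fst ha hc hac
  · exact notdvd_L_snd hb hd h

end

noncomputable section
open Eis

lemma F9_dvd_UT (u : PZ) (hdvd : (1 + X 0 + X 1 : PZ) ∣ UZ u) : F9 Eis ∣ UT u := by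
  have hd : ∀ a b : ℕ, L a b ∣ UT u := L_dvd_UT u hdvd
  obtain ⟨Q1, hU⟩ := hd 0 0
  have t1 : L 1 0 ∣ UT u := hd 1 0
  rw [hU] at t1
  have s1 : L 1 0 ∣ Q1 := (((prime_L 1 0).dvd_or_dvd t1).resolve_left (notdvd_L (by omega) (by omega) (by omega) (by omega) (by decide)))
  obtain ⟨Q2, hQ2⟩ := s1
  rw [hQ2] at hU
  have t2 : L 2 0 ∣ UT u := hd 2 0
  rw [hU] at t2
  have s2 : L 2 0 ∣ Q2 := (((prime_L 2 0).dvd_or_dvd (((prime_L 2 0).dvd_or_dvd t2).resolve_left (notdvd_L (by omega) (by omega) (by omega) (by omega) (by decide)))).resolve_left (notdvd_L (by omega) (by omega) (by omega) (by omega) (by decide)))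
  obtain ⟨Q3, hQ3⟩ := s2
  rw [hQ3] at hU
  have t3 : L 0 1 ∣ UT u := hd 0 1
  rw [hU] at t3
  have s3 : L 0 1 ∣ Q3 := (((prime_L 0 1).dvd_or_dvd (((prime_L 0 1).dvd_or_dvd (((prime_L 0 1).dvd_or_dvd t3).resolve_left (notdvd_L (by omega) (by omega) (by omega) (by omega) (by decide)))).resolve_left (notdvd_L (by omega) (by omega) (by omega) (by omega) (by decide)))).resolve_left (notdvd_L (by omega) (by omega) (by omega) (by omega) (by decide)))
  obtain ⟨Q4, hQ4⟩ := s3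
  rw [hQ4] at hU
  have t4 : L 1 1 ∣ UT u := hd 1 1
  rw [hU] at t4
  have s4 : L 1 1 ∣ Q4 := (((prime_L 1 1).dvd_or_dvd (((prime_L 1 1).dvd_or_dvd (((prime_L 1 1).dvd_or_dvd (((prime_L 1 1).dvd_or_dvd t4).resolve_left (notdvd_L (by omega) (by omega) (by omega) (by omega) (by decide)))).resolve_left (notdvd_L (by omega) (by omega) (by omega) (by omega) (by decide)))).resolve_left (notdvd_L (by omega) (by omega) (by omega) (by omega) (by decide)))).resolve_left (notdvd_L (by omega) (by omega) (by omega) (by omega) (by decide)))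
  obtain ⟨Q5, hQ5⟩ := s4
  rw [hQ5] at hU
  have t5 : L 2 1 ∣ UT u := hd 2 1
  rw [hU] at t5
  have s5 : L 2 1 ∣ Q5 := (((prime_L 2 1).dvd_or_dvd (((prime_L 2 1).dvd_or_dvd (((prime_L 2 1).dvd_or_dvd (((prime_L 2 1).dvd_or_dvd (((prime_L 2 1).dvd_or_dvd t5).resolve_left (notdvd_L (by omega) (by omega) (by omega) (by omega) (by decide)))).resolve_left (notdvd_L (by omega) (by omega) (by omega) (by omega) (by decide)))).resolve_left (notdvd_L (by omega) (by omega) (by omega) (by omega) (by decide)))).resolve_left (notdvd_L (by omega) (by omega) (by omega) (by omega) (by decide)))).resolve_left (notdvd_L (by omega) (by omega) (by omega) (by omega) (by decide)))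
  obtain ⟨Q6, hQ6⟩ := s5
  rw [hQ6] at hU
  have t6 : L 0 2 ∣ UT u := hd 0 2
  rw [hU] at t6
  have s6 : L 0 2 ∣ Q6 := (((prime_L 0 2).dvd_or_dvd (((prime_L 0 2).dvd_or_dvd (((prime_L 0 2).dvd_or_dvd (((prime_L 0 2).dvd_or_dvd (((prime_L 0 2).dvd_or_dvd (((prime_L 0 2).dvd_or_dvd t6).resolve_left (notdvd_L (by omega) (by omega) (by omega) (by omega) (by decide)))).resolve_left (notdvd_L (by omega) (by omega) (by omega) (by omega) (by decide)))).resolve_left (notdvd_L (by omega) (by omega) (by omega) (by omega) (by decide)))).resolve_left (notdvd_L (by omega) (by omega) (by omega) (by omega) (by decide)))).resolve_left (notdvd_L (by omega) (by omega) (by omega) (by omega) (by decide)))).resolve_left (notdvd_L (by omega) (by omega) (by omega) (by omega) (by decide)))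
  obtain ⟨Q7, hQ7⟩ := s6
  rw [hQ7] at hU
  have t7 : L 1 2 ∣ UT u := hd 1 2
  rw [hU] at t7
  have s7 : L 1 2 ∣ Q7 := (((prime_L 1 2).dvd_or_dvd (((prime_L 1 2).dvd_or_dvd (((prime_L 1 2).dvd_or_dvd (((prime_L 1 2).dvd_or_dvd (((prime_L 1 2).dvd_or_dvd (((prime_L 1 2).dvd_or_dvd (((prime_L 1 2).dvd_or_dvd t7).resolve_left (notdvd_L (by omega) (by omega) (by omega) (by omega) (by decide)))).resolve_left (notdvd_L (by omega) (by omega) (by omega) (by omega) (by decide)))).resolve_left (notdvd_L (by omega) (by omega) (by omega) (by omega) (by decide)))).resolve_left (notdvd_L (by omega) (by omega) (by omega) (by omega) (by decide)))).resolve_left (notdvd_L (by omega) (by omega) (by omega) (by omega) (by decide)))).resolve_left (notdvd_L (by omega) (by omega) (by omega) (by omega) (by decide)))).resolve_left (notdvd_L (by omega) (by omega) (by omega) (by omega) (by decide)))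
  obtain ⟨Q8, hQ8⟩ := s7
  rw [hQ8] at hU
  have t8 : L 2 2 ∣ UT u := hd 2 2
  rw [hU] at t8
  have s8 : L 2 2 ∣ Q8 := (((prime_L 2 2).dvd_or_dvd (((prime_L 2 2).dvd_or_dvd (((prime_L 2 2).dvd_or_dvd (((prime_L 2 2).dvd_or_dvd (((prime_L 2 2).dvd_or_dvd (((prime_L 2 2).dvd_or_dvd (((prime_L 2 2).dvd_or_dvd (((prime_L 2 2).dvd_or_dvd t8).resolve_left (notdvd_L (by omega) (by omega) (by omega) (by omega) (by decide)))).resolve_left (notdvd_L (by omega) (by omega) (by omega) (by omega) (by decide)))).resolve_left (notdvd_L (by omega) (by omega) (by omega) (by omega) (by decide)))).resolve_left (notdvd_L (by omega) (by omega) (by omega) (by omega) (by decide)))).resolve_left (notdvd_L (by omega) (by omega) (by omega) (by omega) (by decide)))).resolve_left (notdvd_L (by omega) (by omega) (by omega) (by omega) (by decide)))).resolve_left (notdvd_L (by omega) (by omega) (by omega) (by omega) (by decide)))).resolve_left (notdvd_L (by omega) (by omega) (by omega) (by omega) (by decide)))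
  obtain ⟨Q9, hQ9⟩ := s8
  rw [hQ9] at hU
  refine ⟨Q9, ?_⟩
  rw [hU, ← prod_L]
  ring

end

noncomputable section
open Eis

lemma F9_map : MvPolynomial.map (Int.castRingHom Eis) (F9 ℤ) = F9 Eis := by
  simp only [F9, map_sub, map_pow, map_add, map_one, map_mul, MvPolynomial.map_X,
    map_ofNat]

lemma F9_ne_zero : (F9 Eis) ≠ 0 := by
  intro h
  have h1 : eval (fun _ => (0 : Eis)) (F9 Eis) = 1 := by simp [F9]
  rw [h] at h1
  simp at h1

lemma F9_dvd_UZ (u : PZ) (hdvd : (1 + X 0 + X 1 : PZ) ∣ UZ u) : F9 ℤ ∣ UZ u := by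
  obtain ⟨S, hS⟩ := F9_dvd_UT u hdvd
  have hconjι : Eis.conj.comp (Int.castRingHom Eis) = Int.castRingHom Eis :=
    RingHom.ext_int _ _
  have hcU : MvPolynomial.map Eis.conj (UT u) = UT u := by
    rw [← map_UZ, MvPolynomial.map_map, hconjι]
  have hcF : MvPolynomial.map Eis.conj (F9 Eis) = F9 Eis := by
    rw [← F9_map, MvPolynomial.map_map, hconjι]
  have hcS : MvPolynomial.map Eis.conj S = S := by
    have h1 := congrArg (MvPolynomial.map Eis.conj) hS
    rw [map_mul, hcU, hcF, hS] at h1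
    exact (mul_left_cancel₀ F9_ne_zero h1).symm
  have hfix : ∀ m, ((coeff m S).re : Eis) = coeff m S := by
    intro m
    apply Eis.eq_intCast_of_conj_fixed
    have h2 := congrArg (coeff m) hcS
    rwa [MvPolynomial.coeff_map] at h2
  classical
  set SZ : PZ := ∑ m ∈ S.support, monomial m ((coeff m S).re) with hSZ
  have hmapS : MvPolynomial.map (Int.castRingHom Eis) SZ = S := by
    apply MvPolynomial.ext
    intro n
    rw [MvPolynomial.coeff_map, hSZ, MvPolynomial.coeff_sum]
    simp only [coeff_monomial]
    rw [Finset.sum_ite_eq' S.support n]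
    by_cases hn : n ∈ S.support
    · rw [if_pos hn]
      exact hfix n
    · rw [if_neg hn]
      have h0 : coeff n S = 0 := by
        rwa [← MvPolynomial.notMem_support_iff]
      rw [h0, map_zero]
  refine ⟨SZ, ?_⟩
  have hinj : Function.Injective (Int.castRingHom Eis) := by
    rw [Int.coe_castRingHom]
    exact Int.cast_injective
  apply MvPolynomial.map_injective _ hinj
  rw [map_UZ, map_mul, F9_map, hmapS, hS]

end

noncomputable section
open Eis

lemma smul_cancel {b m : Fin 2 →₀ ℕ} (h : (3 : ℕ) • b = 3 • m) : b = m := by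
  ext i
  have := DFunLike.congr_fun h i
  simp only [Finsupp.smul_apply, smul_eq_mul] at this
  omega

lemma UZ_eq_sum (u : PZ) : UZ u = ∑ m ∈ u.support, monomial (3 • m) (coeff m u) := by
  rw [UZ, aeval_def, eval₂_eq']
  apply Finset.sum_congr rfl
  intro m _
  rw [monomial_eq, Finsupp.prod_fintype _ _ (fun i => pow_zero _)]
  congr 1
  apply Finset.prod_congr rfl
  intro i _
  rw [← pow_mul]
  congr 1
  try simp only [Finsupp.smul_apply, smul_eq_mul]

lemma UZ_coeff (u : PZ) (n : Fin 2 →₀ ℕ) :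
    coeff n (UZ u) = 0 ∨ ∃ m, coeff n (UZ u) = coeff m u := by
  classical
  rw [UZ_eq_sum, MvPolynomial.coeff_sum]
  simp only [coeff_monomial]
  by_cases hex : ∃ m ∈ u.support, (3 : ℕ) • m = n
  · obtain ⟨m0, hm0, hm0n⟩ := hex
    right
    refine ⟨m0, ?_⟩
    rw [Finset.sum_eq_single m0]
    · rw [if_pos hm0n]
    · intro b hb hbne
      rw [if_neg]
      intro hc
      exact hbne (smul_cancel (hc.trans hm0n.symm))
    · intro hns
      exact absurd hm0 hns
  · left
    apply Finset.sum_eq_zero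
    intro m hm
    rw [if_neg]
    intro hc
    exact hex ⟨m, hm, hc⟩

lemma UZ_ne_zero (u : PZ) (hu : u ≠ 0) : UZ u ≠ 0 := by
  obtain ⟨m, hm⟩ : ∃ m, coeff m u ≠ 0 := by
    by_contra h
    push_neg at h
    exact hu (MvPolynomial.ext _ _ (by simpa using h))
  intro h0
  have hkey : coeff ((3 : ℕ) • m) (UZ u) = coeff m u := by
    rw [UZ_eq_sum, MvPolynomial.coeff_sum]
    simp only [coeff_monomial]
    rw [Finset.sum_eq_single m]
    · rw [if_pos rfl]
    · intro b hb hbne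
      rw [if_neg]
      intro hc
      exact hbne (smul_cancel hc)
    · intro hns
      exact absurd (MvPolynomial.mem_support_iff.mpr hm) hns
  rw [h0] at hkey
  simp only [coeff_zero] at hkey
  exact hm hkey.symm

end

noncomputable section
open Eis

/-- Exponent vector `(a, b)`. -/
def dd (a b : ℕ) : Fin 2 →₀ ℕ := Finsupp.single 0 a + Finsupp.single 1 b

lemma dd_apply0 (a b : ℕ) : dd a b 0 = a := by
  simp [dd, Finsupp.single_apply]

lemma dd_apply1 (a b : ℕ) : dd a b 1 = b := by
  simp [dd, Finsupp.single_apply]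

lemma dd_add (a b c d : ℕ) : dd a b + dd c d = dd (a + c) (b + d) := by
  simp only [dd, Finsupp.single_add]
  abel

lemma dd_zero : dd 0 0 = 0 := by
  simp [dd]

lemma mono_eq (a b : ℕ) (c : ℤ) : (monomial (dd a b) c : PZ) = C c * X 0 ^ a * X 1 ^ b := by
  rw [X_pow_eq_monomial, X_pow_eq_monomial, C_apply, monomial_mul, monomial_mul]
  rw [dd]
  simp [zero_add]

lemma F9ex : (F9 ℤ : PZ) = monomial (dd 0 0) 1 + monomial (dd 3 0) 3 + monomial (dd 0 3) 3
    + monomial (dd 6 0) 3 + monomial (dd 3 3) (-21) + monomial (dd 0 6) 3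
    + monomial (dd 9 0) 1 + monomial (dd 6 3) 3 + monomial (dd 3 6) 3
    + monomial (dd 0 9) 1 := by
  simp only [mono_eq, F9, map_neg, map_ofNat, C_1]
  ring

lemma F9_has_big_coeff (S : PZ) (hS : S ≠ 0) : ∃ n, 2 ≤ |coeff n (F9 ℤ * S)| := by
  classical
  have hsupp : S.support.Nonempty := by
    rw [Finset.nonempty_iff_ne_empty]
    intro h
    exact hS (MvPolynomial.support_eq_empty.mp h)
  set σ : ℤ := (S.support.image fun m => |coeff m S|).max' (hsupp.image (fun m => |coeff m S|)) with hσdef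
  have hσ_mem : ∃ m ∈ S.support, |coeff m S| = σ := by
    have h := (S.support.image fun m => |coeff m S|).max'_mem (hsupp.image (fun m => |coeff m S|))
    rw [Finset.mem_image] at h
    exact h
  have hσ_le : ∀ m, |coeff m S| ≤ σ := by
    intro m
    by_cases hm : m ∈ S.support
    · exact Finset.le_max' (S.support.image fun m => |coeff m S|) (|coeff m S|)
        (Finset.mem_image_of_mem (fun m => |coeff m S|) hm)
    · rw [MvPolynomial.notMem_support_iff.mp hm]
      obtain ⟨m0, _, hm0⟩ := hσ_mem
      rw [← hm0]
      simp [abs_nonneg]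
  have hσ1 : 1 ≤ σ := by
    obtain ⟨m0, hm0s, hm0⟩ := hσ_mem
    rw [← hm0]
    exact Int.one_le_abs (MvPolynomial.mem_support_iff.mp hm0s)
  set A := S.support.filter (fun m => |coeff m S| = σ) with hAdef
  have hA : A.Nonempty := by
    obtain ⟨m0, h1, h2⟩ := hσ_mem
    exact ⟨m0, Finset.mem_filter.mpr ⟨h1, h2⟩⟩
  set D : ℕ := (A.image fun m => m 0 + m 1).max' (hA.image (fun m => m 0 + m 1)) with hDdef
  have hD_mem : ∃ m ∈ A, m 0 + m 1 = D := by
    have h := (A.image fun m => m 0 + m 1).max'_mem (hA.image (fun m => m 0 + m 1))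
    rw [Finset.mem_image] at h
    exact h
  obtain ⟨mst, hmstA, hmstD⟩ := hD_mem
  have hmst_val : |coeff mst S| = σ := (Finset.mem_filter.mp hmstA).2
  have hhigh : ∀ n : Fin 2 →₀ ℕ, D < n 0 + n 1 → |coeff n S| ≤ σ - 1 := by
    intro n hn
    have h1 : |coeff n S| ≤ σ := hσ_le n
    rcases lt_or_eq_of_le h1 with h | h
    · omega
    · exfalso
      have hnsupp : n ∈ S.support := by
        rw [MvPolynomial.mem_support_iff]
        intro h0
        rw [h0] at h
        simp at h
        omega
      have hnA : n ∈ A := Finset.mem_filter.mpr ⟨hnsupp, h⟩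
      have h2 : n 0 + n 1 ≤ D := Finset.le_max' (A.image fun m => m 0 + m 1) (n 0 + n 1)
        (Finset.mem_image_of_mem (fun m => m 0 + m 1) hnA)
      omega
  refine ⟨mst + dd 3 3, ?_⟩
  have hcoeff : coeff (mst + dd 3 3) (F9 ℤ * S)
      = (if dd 0 0 ≤ mst + dd 3 3 then 1 * coeff (mst + dd 3 3 - dd 0 0) S else 0)
      + (if dd 3 0 ≤ mst + dd 3 3 then 3 * coeff (mst + dd 3 3 - dd 3 0) S else 0)
      + (if dd 0 3 ≤ mst + dd 3 3 then 3 * coeff (mst + dd 3 3 - dd 0 3) S else 0)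
      + (if dd 6 0 ≤ mst + dd 3 3 then 3 * coeff (mst + dd 3 3 - dd 6 0) S else 0)
      + (if dd 3 3 ≤ mst + dd 3 3 then (-21) * coeff (mst + dd 3 3 - dd 3 3) S else 0)
      + (if dd 0 6 ≤ mst + dd 3 3 then 3 * coeff (mst + dd 3 3 - dd 0 6) S else 0)
      + (if dd 9 0 ≤ mst + dd 3 3 then 1 * coeff (mst + dd 3 3 - dd 9 0) S else 0)
      + (if dd 6 3 ≤ mst + dd 3 3 then 3 * coeff (mst + dd 3 3 - dd 6 3) S else 0)
      + (if dd 3 6 ≤ mst + dd 3 3 then 3 * coeff (mst + dd 3 3 - dd 3 6) S else 0)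
      + (if dd 0 9 ≤ mst + dd 3 3 then 1 * coeff (mst + dd 3 3 - dd 0 9) S else 0) := by
    rw [F9ex]
    simp only [add_mul, coeff_add, coeff_monomial_mul']
  set t1 := (if dd 0 0 ≤ mst + dd 3 3 then 1 * coeff (mst + dd 3 3 - dd 0 0) S else 0) with ht1
  set t2 := (if dd 3 0 ≤ mst + dd 3 3 then 3 * coeff (mst + dd 3 3 - dd 3 0) S else 0) with ht2
  set t3 := (if dd 0 3 ≤ mst + dd 3 3 then 3 * coeff (mst + dd 3 3 - dd 0 3) S else 0) with ht3
  set t4 := (if dd 6 0 ≤ mst + dd 3 3 then 3 * coeff (mst + dd 3 3 - dd 6 0) S else 0) with ht4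
  set t5 := (if dd 3 3 ≤ mst + dd 3 3 then (-21) * coeff (mst + dd 3 3 - dd 3 3) S else 0) with ht5
  set t6 := (if dd 0 6 ≤ mst + dd 3 3 then 3 * coeff (mst + dd 3 3 - dd 0 6) S else 0) with ht6
  set t7 := (if dd 9 0 ≤ mst + dd 3 3 then 1 * coeff (mst + dd 3 3 - dd 9 0) S else 0) with ht7
  set t8 := (if dd 6 3 ≤ mst + dd 3 3 then 3 * coeff (mst + dd 3 3 - dd 6 3) S else 0) with ht8
  set t9 := (if dd 3 6 ≤ mst + dd 3 3 then 3 * coeff (mst + dd 3 3 - dd 3 6) S else 0) with ht9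
  set t10 := (if dd 0 9 ≤ mst + dd 3 3 then 1 * coeff (mst + dd 3 3 - dd 0 9) S else 0) with ht10
  -- main term
  have hmain : t5 = (-21) * coeff mst S := by
    rw [ht5, if_pos le_add_self, add_tsub_cancel_right]
  -- generic bound for possibly-out-of-range terms
  have hgen : ∀ (g : Fin 2 →₀ ℕ) (k : ℤ), 0 ≤ k →
      |(if g ≤ mst + dd 3 3 then k * coeff (mst + dd 3 3 - g) S else 0)| ≤ k * σ := by
    intro g k hk
    split_ifs with h
    · rw [abs_mul, abs_of_nonneg hk]
      exact mul_le_mul_of_nonneg_left (hσ_le _) hk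
    · rw [abs_zero]
      positivity
  -- low terms: partner has degree > D
  have hlow1 : |t1| ≤ σ - 1 := by
    rw [ht1, if_pos (by rw [dd_zero]; exact zero_le), one_mul, dd_zero, tsub_zero]
    apply hhigh
    simp only [Finsupp.add_apply, dd_apply0, dd_apply1]
    omega
  have hlow2 : |t2| ≤ 3 * (σ - 1) := by
    have he : mst + dd 3 3 = (mst + dd 0 3) + dd 3 0 := by
      rw [add_assoc, dd_add]
    rw [ht2, he, if_pos le_add_self, add_tsub_cancel_right]
    rw [abs_mul]
    have h3 : |(3:ℤ)| = 3 := by norm_num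
    rw [h3]
    apply mul_le_mul_of_nonneg_left _ (by norm_num)
    apply hhigh
    simp only [Finsupp.add_apply, dd_apply0, dd_apply1]
    omega
  have hlow3 : |t3| ≤ 3 * (σ - 1) := by
    have he : mst + dd 3 3 = (mst + dd 3 0) + dd 0 3 := by
      rw [add_assoc, dd_add]
    rw [ht3, he, if_pos le_add_self, add_tsub_cancel_right]
    rw [abs_mul]
    have h3 : |(3:ℤ)| = 3 := by norm_num
    rw [h3]
    apply mul_le_mul_of_nonneg_left _ (by norm_num)
    apply hhigh
    simp only [Finsupp.add_apply, dd_apply0, dd_apply1]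
    omega
  have hb4 : |t4| ≤ 3 * σ := by rw [ht4]; exact hgen _ 3 (by norm_num)
  have hb6 : |t6| ≤ 3 * σ := by rw [ht6]; exact hgen _ 3 (by norm_num)
  have hb7 : |t7| ≤ 1 * σ := by rw [ht7]; exact hgen _ 1 (by norm_num)
  have hb8 : |t8| ≤ 3 * σ := by rw [ht8]; exact hgen _ 3 (by norm_num)
  have hb9 : |t9| ≤ 3 * σ := by rw [ht9]; exact hgen _ 3 (by norm_num)
  have hb10 : |t10| ≤ 1 * σ := by rw [ht10]; exact hgen _ 1 (by norm_num)
  -- assemble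
  set x := coeff (mst + dd 3 3) (F9 ℤ * S) with hx
  have hrest : x - t5 = t1 + t2 + t3 + t4 + t6 + t7 + t8 + t9 + t10 := by
    rw [hcoeff]
    ring
  have htri : |x - t5| ≤ |t1| + |t2| + |t3| + |t4| + |t6| + |t7| + |t8| + |t9| + |t10| := by
    rw [hrest]
    calc |t1 + t2 + t3 + t4 + t6 + t7 + t8 + t9 + t10|
        ≤ |t1 + t2 + t3 + t4 + t6 + t7 + t8 + t9| + |t10| := abs_add_le _ _
      _ ≤ (|t1 + t2 + t3 + t4 + t6 + t7 + t8| + |t9|) + |t10| := by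
          apply add_le_add_left (abs_add_le _ _)
      _ ≤ ((|t1 + t2 + t3 + t4 + t6 + t7| + |t8|) + |t9|) + |t10| := by
          apply add_le_add_left; apply add_le_add_left (abs_add_le _ _)
      _ ≤ (((|t1 + t2 + t3 + t4 + t6| + |t7|) + |t8|) + |t9|) + |t10| := by
          apply add_le_add_left; apply add_le_add_left; apply add_le_add_left (abs_add_le _ _)
      _ ≤ ((((|t1 + t2 + t3 + t4| + |t6|) + |t7|) + |t8|) + |t9|) + |t10| := by
          apply add_le_add_left; apply add_le_add_left; apply add_le_add_left
          apply add_le_add_left (abs_add_le _ _)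
      _ ≤ (((((|t1 + t2 + t3| + |t4|) + |t6|) + |t7|) + |t8|) + |t9|) + |t10| := by
          apply add_le_add_left; apply add_le_add_left; apply add_le_add_left
          apply add_le_add_left; apply add_le_add_left (abs_add_le _ _)
      _ ≤ ((((((|t1 + t2| + |t3|) + |t4|) + |t6|) + |t7|) + |t8|) + |t9|) + |t10| := by
          apply add_le_add_left; apply add_le_add_left; apply add_le_add_left
          apply add_le_add_left; apply add_le_add_left; apply add_le_add_left (abs_add_le _ _)
      _ ≤ (((((((|t1| + |t2|) + |t3|) + |t4|) + |t6|) + |t7|) + |t8|) + |t9|) + |t10| := by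
          apply add_le_add_left; apply add_le_add_left; apply add_le_add_left
          apply add_le_add_left; apply add_le_add_left; apply add_le_add_left
          apply add_le_add_left (abs_add_le _ _)
      _ = |t1| + |t2| + |t3| + |t4| + |t6| + |t7| + |t8| + |t9| + |t10| := by ring
  have ht5abs : |t5| = 21 * σ := by
    rw [hmain, abs_mul, ← hmst_val]
    norm_num
  have habs1 : |t5| - |x - t5| ≤ |x| := by
    have h := abs_sub_abs_le_abs_sub t5 x
    have h2 := abs_sub_comm t5 x
    linarith
  have : (2:ℤ) ≤ |x| := by linarith
  exact this

end

/-- If `u(x,y)` is a nonzero integer polynomial with coefficients in `{-1,0,1}`,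
then `1 + x + y` does not divide `u(x³, y³)` in `ℤ[x,y]`. -/
theorem one_add_x_add_y_not_dvd_flat_in_cubes (u : MvPolynomial (Fin 2) ℤ)
    (hu : u ≠ 0) (hflat : ∀ m, coeff m u ∈ ({-1, 0, 1} : Set ℤ)) :
    ¬ (1 + X 0 + X 1 : MvPolynomial (Fin 2) ℤ) ∣
        aeval (fun i => (X i : MvPolynomial (Fin 2) ℤ) ^ 3) u := by
  intro hdvd
  have hdvd' : (1 + X 0 + X 1 : PZ) ∣ UZ u := hdvd
  obtain ⟨S, hS⟩ := F9_dvd_UZ u hdvd'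
  have hSne : S ≠ 0 := by
    intro h
    rw [h, mul_zero] at hS
    exact UZ_ne_zero u hu hS
  obtain ⟨n, hn⟩ := F9_has_big_coeff S hSne
  rw [← hS] at hn
  have hb : |coeff n (UZ u)| ≤ 1 := by
    rcases UZ_coeff u n with h | ⟨m, h⟩
    · rw [h]
      norm_num
    · rw [h]
      have h1 := hflat m
      simp only [Set.mem_insert_iff, Set.mem_singleton_iff] at h1
      rcases h1 with h1 | h1 | h1 <;> rw [h1] <;> norm_num
  linarith
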